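/- arXiv:2202.03790 — 4 statements merged into one kernel-verified Lean document; each statement's English description precedes it below -/
import Mathlib

section
/- Let A be a bounded linear operator on H. Then for every real number r ≥ 1 and every α ∈ [0,1], ber(A)^{2r} ≤ ber(α·|A|^{2r} + (1−α)·|A*|^{2r}). -/
set_option synthInstance.maxHeartbeats 1000000
set_option maxHeartbeats 1000000

open scoped NNReal
open ContinuousLinearMap

/-- The Berezin number of an operator `T`, relative to the family `k` of
(normalized reproducing kernel) vectors indexed by `Ω`. -/
noncomputable def ber {H : Type*} [NormedAddCommGroup H] [InnerProductSpace ℂ H]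
    {Ω : Type*} (k : Ω → H) (T : H →L[ℂ] H) : ℝ :=
  ⨆ lam : Ω, ‖(inner ℂ (T (k lam)) (k lam) : ℂ)‖

/-- The absolute value `|T| = (T*T)^(1/2)` of a bounded operator. -/
noncomputable def opAbs {H : Type*} [NormedAddCommGroup H] [InnerProductSpace ℂ H]
    [CompleteSpace H] (T : H →L[ℂ] H) : H →L[ℂ] H :=
  CFC.sqrt (adjoint T * T)

section Auxiliary

variable {H : Type*} [NormedAddCommGroup H] [InnerProductSpace ℂ H] [CompleteSpace H]

lemma rpow_eq_cfc_real (P : H →L[ℂ] H) (hP : 0 ≤ P) (r : ℝ) :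
    CFC.rpow P r = cfc (fun t : ℝ => t ^ r) P := by
  rw [CFC.rpow, cfc_nnreal_eq_real _ P hP]
  apply cfc_congr
  intro t ht
  have ht0 : 0 ≤ t := spectrum_nonneg_of_nonneg hP ht
  simp [NNReal.coe_rpow, Real.coe_toNNReal t ht0]

lemma inner_re_mono {X Y : H →L[ℂ] H} (h : X ≤ Y) (x : H) :
    (inner ℂ (X x) x : ℂ).re ≤ (inner ℂ (Y x) x : ℂ).re := by
  have h' := ((le_def X Y).mp h).re_inner_nonneg_left x
  simp only [sub_apply, inner_sub_left, map_sub, RCLike.re_to_complex] at h'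
  linarith

lemma re_inner_real_smul (a : ℝ) (y x : H) :
    (inner ℂ (a • y) x : ℂ).re = a * (inner ℂ y x : ℂ).re := by
  rw [← Complex.coe_smul, inner_smul_left]
  simp [Complex.conj_ofReal]

lemma bernoulli_aux {c t r : ℝ} (hc : 0 < c) (ht : 0 ≤ t) (hr : 1 ≤ r) :
    c ^ r + (r * c ^ (r - 1)) * (t - c) ≤ t ^ r := by
  have hs : (-1 : ℝ) ≤ t / c - 1 := by
    have := div_nonneg ht hc.le; linarith
  have h1 := one_add_mul_self_le_rpow_one_add hs hr
  rw [show (1 : ℝ) + (t / c - 1) = t / c by ring] at h1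
  have hcr : (0:ℝ) < c ^ r := Real.rpow_pos_of_pos hc r
  have h2 : c ^ r * (t / c) ^ r = t ^ r := by
    rw [Real.div_rpow ht hc.le]; field_simp
  have h4 := mul_le_mul_of_nonneg_left h1 hcr.le
  rw [h2] at h4
  have h3 : c ^ r = c ^ (r - 1) * c := by
    rw [← Real.rpow_add_one hc.ne' (r - 1)]; ring_nf
  have h5 : c ^ r * (1 + r * (t / c - 1)) = c ^ r + (r * c ^ (r-1)) * (t - c) := by
    rw [h3]; field_simp
  linarith [h5 ▸ h4]

/-- Operator Jensen / McCarthy inequality for a positive operator and a unit vector: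
`⟪P x, x⟫ ^ r ≤ ⟪P ^ r x, x⟫` for `r ≥ 1`. -/
lemma jensen_rpow (P : H →L[ℂ] H) (hP : 0 ≤ P) (x : H) (hx : ‖x‖ = 1)
    (r : ℝ) (hr : 1 ≤ r) :
    (inner ℂ (P x) x : ℂ).re ^ r ≤ (inner ℂ ((CFC.rpow P r) x) x : ℂ).re := by
  have hr0 : (0:ℝ) < r := lt_of_lt_of_le one_pos hr
  have hPpos : P.IsPositive := (nonneg_iff_isPositive P).mp hP
  have hPsa : IsSelfAdjoint P := IsSelfAdjoint.of_nonneg hP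
  set c : ℝ := (inner ℂ (P x) x : ℂ).re with hc
  have hc0 : 0 ≤ c := by
    have := hPpos.re_inner_nonneg_left x
    simpa [RCLike.re_to_complex] using this
  have hRnn : 0 ≤ CFC.rpow P r := CFC.rpow_nonneg
  have hRpos := ((nonneg_iff_isPositive _).mp hRnn).re_inner_nonneg_left x
  rcases eq_or_lt_of_le hc0 with hc0' | hcpos
  · rw [← hc0', Real.zero_rpow hr0.ne']
    simpa [RCLike.re_to_complex] using hRpos
  · have hcont : ContinuousOn (fun t : ℝ => t ^ r) (spectrum ℝ P) := fun t _ =>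
      (Real.continuousAt_rpow_const t r (Or.inr hr0.le)).continuousWithinAt
    set b : ℝ := r * c ^ (r - 1) with hb
    have key : ∀ t ∈ spectrum ℝ P, (c ^ r - b * c) + b * t ≤ t ^ r := by
      intro t ht
      have ht0 : 0 ≤ t := spectrum_nonneg_of_nonneg hP ht
      have := bernoulli_aux hcpos ht0 hr
      rw [hb]; linarith [this]
    have hmono : cfc (fun t : ℝ => (c ^ r - b * c) + b * t) P ≤ cfc (fun t : ℝ => t ^ r) P :=
      cfc_mono key (by fun_prop) hcont
    have haff : cfc (fun t : ℝ => (c ^ r - b * c) + b * t) P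
        = algebraMap ℝ (H →L[ℂ] H) (c ^ r - b * c) + b • P := by
      rw [cfc_const_add (c ^ r - b * c) (fun t : ℝ => b * t) P (by fun_prop) hPsa,
        cfc_const_mul_id b P hPsa]
    rw [haff, ← rpow_eq_cfc_real P hP r] at hmono
    have hinner := inner_re_mono hmono x
    have hleft : (inner ℂ ((algebraMap ℝ (H →L[ℂ] H) (c ^ r - b * c) + b • P) x) x : ℂ).re
        = c ^ r := by
      have hxx : (inner ℂ x x : ℂ) = 1 := by
        rw [inner_self_eq_norm_sq_to_K, hx]; norm_num
      simp only [add_apply, inner_add_left, Algebra.algebraMap_eq_smul_one, smul_apply,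
        ContinuousLinearMap.one_apply, coe_smul', Pi.smul_apply, Complex.add_re, re_inner_real_smul, hxx]
      simp only [Complex.one_re, ← hc]
      ring
    rw [hleft] at hinner
    linarith

lemma star_mul_self_nonneg' (A : H →L[ℂ] H) : (0 : H →L[ℂ] H) ≤ adjoint A * A := by
  simpa [ContinuousLinearMap.star_eq_adjoint] using star_mul_self_nonneg A

lemma opAbs_rpow (A : H →L[ℂ] H) (r : ℝ) (hr : 1 ≤ r) :
    CFC.rpow (opAbs A) (2 * r) = CFC.rpow (adjoint A * A) r := by
  have h0 : (0:H →L[ℂ] H) ≤ adjoint A * A := star_mul_self_nonneg' A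
  rw [opAbs, CFC.sqrt_eq_rpow, CFC.rpow_eq_pow, CFC.rpow_eq_pow,
    CFC.rpow_rpow_of_exponent_nonneg _ _ _ (by norm_num) (by positivity) h0]
  rw [show (1/2 * (2 * r) : ℝ) = r by ring]

lemma per_op (A : H →L[ℂ] H) (x : H) (hx : ‖x‖ = 1) (r : ℝ) (hr : 1 ≤ r) :
    ‖(inner ℂ (A x) x : ℂ)‖ ^ (2 * r) ≤ (inner ℂ ((CFC.rpow (opAbs A) (2 * r)) x) x : ℂ).re := by
  rw [opAbs_rpow A r hr]
  have h0 := star_mul_self_nonneg' A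
  have h1 : ‖(inner ℂ (A x) x : ℂ)‖ ≤ ‖A x‖ := by
    simpa [hx] using norm_inner_le_norm (𝕜 := ℂ) (A x) x
  have h2 : (inner ℂ ((adjoint A * A) x) x : ℂ).re = ‖A x‖ ^ 2 := by
    rw [ContinuousLinearMap.mul_apply, adjoint_inner_left]
    simpa [RCLike.re_to_complex] using inner_self_eq_norm_sq (𝕜 := ℂ) (A x)
  calc ‖(inner ℂ (A x) x : ℂ)‖ ^ (2 * r)
      ≤ ‖A x‖ ^ (2 * r) := Real.rpow_le_rpow (norm_nonneg _) h1 (by positivity)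
    _ = ((inner ℂ ((adjoint A * A) x) x : ℂ).re) ^ r := by
        rw [h2, ← Real.rpow_natCast ‖A x‖ 2, ← Real.rpow_mul (norm_nonneg _)]
        norm_num
    _ ≤ _ := jensen_rpow _ h0 x hx r hr

lemma per_op' (A : H →L[ℂ] H) (x : H) (hx : ‖x‖ = 1) (r : ℝ) (hr : 1 ≤ r) :
    ‖(inner ℂ (A x) x : ℂ)‖ ^ (2 * r)
      ≤ (inner ℂ ((CFC.rpow (opAbs (adjoint A)) (2 * r)) x) x : ℂ).re := by
  have h := per_op (adjoint A) x hx r hr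
  have heq : ‖(inner ℂ ((adjoint A) x) x : ℂ)‖ = ‖(inner ℂ (A x) x : ℂ)‖ := by
    rw [adjoint_inner_left, norm_inner_symm]
  rwa [heq] at h

end Auxiliary

theorem berezin_power_inequality
    {H : Type*} [NormedAddCommGroup H] [InnerProductSpace ℂ H] [CompleteSpace H]
    {Ω : Type*} [Nonempty Ω] (k : Ω → H) (hk : ∀ lam, ‖k lam‖ = 1)
    (A : H →L[ℂ] H) (r : ℝ) (hr : 1 ≤ r) (α : ℝ) (hα : α ∈ Set.Icc (0 : ℝ) 1) :
    ber k A ^ (2 * r) ≤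
      ber k (α • CFC.rpow (opAbs A) (2 * r)
        + (1 - α) • CFC.rpow (opAbs (adjoint A)) (2 * r)) := by
  obtain ⟨hα0, hα1⟩ := hα
  set X := CFC.rpow (opAbs A) (2 * r) with hX
  set Y := CFC.rpow (opAbs (adjoint A)) (2 * r) with hY
  set T := α • X + (1 - α) • Y with hT
  have h2r : (0:ℝ) < 2 * r := by linarith
  have hB0 : 0 ≤ ber k T := Real.iSup_nonneg fun lam => norm_nonneg _
  have hbdd : BddAbove (Set.range fun lam => ‖(inner ℂ (T (k lam)) (k lam) : ℂ)‖) := by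
    refine ⟨‖T‖, ?_⟩
    rintro y ⟨lam, rfl⟩
    calc ‖(inner ℂ (T (k lam)) (k lam) : ℂ)‖
        ≤ ‖T (k lam)‖ * ‖k lam‖ := norm_inner_le_norm _ _
      _ ≤ ‖T‖ := by
          rw [hk lam, mul_one]
          simpa [hk lam] using T.le_opNorm (k lam)
  have key : ∀ lam, ‖(inner ℂ (A (k lam)) (k lam) : ℂ)‖ ^ (2 * r) ≤ ber k T := by
    intro lam
    have e1 := per_op A (k lam) (hk lam) r hr
    have e2 := per_op' A (k lam) (hk lam) r hr
    have e3 : α * (inner ℂ (X (k lam)) (k lam) : ℂ).re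
        + (1 - α) * (inner ℂ (Y (k lam)) (k lam) : ℂ).re
        = (inner ℂ (T (k lam)) (k lam) : ℂ).re := by
      simp only [hT, add_apply, smul_apply, inner_add_left, Complex.add_re, re_inner_real_smul]
    calc ‖(inner ℂ (A (k lam)) (k lam) : ℂ)‖ ^ (2 * r)
        = α * ‖(inner ℂ (A (k lam)) (k lam) : ℂ)‖ ^ (2 * r)
          + (1 - α) * ‖(inner ℂ (A (k lam)) (k lam) : ℂ)‖ ^ (2 * r) := by ring
      _ ≤ α * (inner ℂ (X (k lam)) (k lam) : ℂ).re
          + (1 - α) * (inner ℂ (Y (k lam)) (k lam) : ℂ).re :=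
          add_le_add (mul_le_mul_of_nonneg_left e1 hα0)
            (mul_le_mul_of_nonneg_left e2 (by linarith))
      _ = (inner ℂ (T (k lam)) (k lam) : ℂ).re := e3
      _ ≤ ‖(inner ℂ (T (k lam)) (k lam) : ℂ)‖ := by
          simpa [RCLike.re_to_complex] using
            RCLike.re_le_norm (inner ℂ (T (k lam)) (k lam) : ℂ)
      _ ≤ ber k T := le_ciSup hbdd lam
  have hA0 : 0 ≤ ber k A := Real.iSup_nonneg fun lam => norm_nonneg _
  have step : ber k A ≤ (ber k T) ^ (1 / (2 * r)) := by
    refine Real.iSup_le (fun lam => ?_) (Real.rpow_nonneg hB0 _)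
    have h := Real.rpow_le_rpow (Real.rpow_nonneg (norm_nonneg _) _) (key lam)
      (by positivity : (0:ℝ) ≤ 1 / (2 * r))
    rwa [← Real.rpow_mul (norm_nonneg _), mul_one_div, div_self h2r.ne', Real.rpow_one] at h
  calc ber k A ^ (2 * r)
      ≤ ((ber k T) ^ (1 / (2 * r))) ^ (2 * r) := Real.rpow_le_rpow hA0 step h2r.le
    _ = ber k T := by
        rw [← Real.rpow_mul hB0, one_div, inv_mul_cancel₀ h2r.ne', Real.rpow_one]
end

section
/- Let A be a bounded linear operator on H. Then for every α ∈ [0,1], ber(A)^2 ≤ ber(α·A*A + (1−α)·AA*); in particular ber(A)^2 ≤ (1/2)·ber(A*A + AA*). -/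
set_option synthInstance.maxHeartbeats 1000000
set_option maxHeartbeats 1000000

open scoped NNReal
open ContinuousLinearMap

lemma ber_bddAbove {H : Type*} [NormedAddCommGroup H] [InnerProductSpace ℂ H]
    {Ω : Type*} (k : Ω → H) (hk : ∀ lam, ‖k lam‖ = 1) (T : H →L[ℂ] H) :
    BddAbove (Set.range fun lam : Ω => ‖(inner ℂ (T (k lam)) (k lam) : ℂ)‖) := by
  refine ⟨‖T‖, ?_⟩
  rintro _ ⟨lam, rfl⟩
  calc ‖(inner ℂ (T (k lam)) (k lam) : ℂ)‖ ≤ ‖T (k lam)‖ * ‖k lam‖ := norm_inner_le_norm _ _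
    _ ≤ (‖T‖ * ‖k lam‖) * ‖k lam‖ := by
        gcongr; exact le_opNorm T (k lam)
    _ = ‖T‖ := by rw [hk]; ring

lemma ber_nonneg {H : Type*} [NormedAddCommGroup H] [InnerProductSpace ℂ H]
    {Ω : Type*} [Nonempty Ω] (k : Ω → H) (hk : ∀ lam, ‖k lam‖ = 1) (T : H →L[ℂ] H) :
    0 ≤ ber k T := by
  obtain ⟨lam⟩ := ‹Nonempty Ω›
  exact (norm_nonneg _).trans (le_ciSup (ber_bddAbove k hk T) lam)

lemma le_ber {H : Type*} [NormedAddCommGroup H] [InnerProductSpace ℂ H]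
    {Ω : Type*} (k : Ω → H) (hk : ∀ lam, ‖k lam‖ = 1) (T : H →L[ℂ] H) (lam : Ω) :
    ‖(inner ℂ (T (k lam)) (k lam) : ℂ)‖ ≤ ber k T :=
  le_ciSup (ber_bddAbove k hk T) lam

theorem berezin_sq_convex_combination
    {H : Type*} [NormedAddCommGroup H] [InnerProductSpace ℂ H] [CompleteSpace H]
    {Ω : Type*} [Nonempty Ω] (k : Ω → H) (hk : ∀ lam, ‖k lam‖ = 1)
    (A : H →L[ℂ] H) (α : ℝ) (hα : α ∈ Set.Icc (0 : ℝ) 1) :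
    ber k A ^ 2 ≤ ber k (α • (adjoint A * A) + (1 - α) • (A * adjoint A)) ∧
      ber k A ^ 2 ≤ (1 / 2 : ℝ) * ber k (adjoint A * A + A * adjoint A) := by
  obtain ⟨hα0, hα1⟩ := hα
  -- pointwise facts
  have hAA : ∀ x : H, (inner ℂ ((adjoint A * A) x) x : ℂ) = ((‖A x‖ ^ 2 : ℝ) : ℂ) := by
    intro x
    simp only [ContinuousLinearMap.mul_apply]
    rw [adjoint_inner_left, inner_self_eq_norm_sq_to_K]
    norm_cast
  have hAAs : ∀ x : H, (inner ℂ ((A * adjoint A) x) x : ℂ) = ((‖adjoint A x‖ ^ 2 : ℝ) : ℂ) := by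
    intro x
    simp only [ContinuousLinearMap.mul_apply]
    rw [← adjoint_inner_right, inner_self_eq_norm_sq_to_K]
    norm_cast
  have h1 : ∀ lam : Ω, ‖(inner ℂ (A (k lam)) (k lam) : ℂ)‖ ≤ ‖A (k lam)‖ := by
    intro lam
    calc ‖(inner ℂ (A (k lam)) (k lam) : ℂ)‖ ≤ ‖A (k lam)‖ * ‖k lam‖ := norm_inner_le_norm _ _
      _ = ‖A (k lam)‖ := by rw [hk, mul_one]
  have h2 : ∀ lam : Ω, ‖(inner ℂ (A (k lam)) (k lam) : ℂ)‖ ≤ ‖adjoint A (k lam)‖ := by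
    intro lam
    have : (inner ℂ (A (k lam)) (k lam) : ℂ) = inner ℂ (k lam) (adjoint A (k lam)) :=
      (adjoint_inner_right A _ _).symm
    rw [this]
    calc ‖(inner ℂ (k lam) (adjoint A (k lam)) : ℂ)‖ ≤ ‖k lam‖ * ‖adjoint A (k lam)‖ :=
          norm_inner_le_norm _ _
      _ = ‖adjoint A (k lam)‖ := by rw [hk, one_mul]
  constructor
  · set S := α • (adjoint A * A) + (1 - α) • (A * adjoint A) with hS
    have hSval : ∀ x : H, (inner ℂ (S x) x : ℂ) =
        ((α * ‖A x‖ ^ 2 + (1 - α) * ‖adjoint A x‖ ^ 2 : ℝ) : ℂ) := by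
      intro x
      simp only [hS, ContinuousLinearMap.add_apply, ContinuousLinearMap.coe_smul',
        Pi.smul_apply, inner_add_left]
      rw [RCLike.real_smul_eq_coe_smul (K := ℂ), RCLike.real_smul_eq_coe_smul (K := ℂ),
        inner_smul_left, inner_smul_left, hAA, hAAs]
      push_cast
      simp only [map_sub, map_one, Complex.conj_ofReal, RCLike.conj_ofReal,
        Complex.coe_algebraMap]
    have key : ∀ lam : Ω, ‖(inner ℂ (A (k lam)) (k lam) : ℂ)‖ ^ 2 ≤ ber k S := by
      intro lam
      have hb : ‖(inner ℂ (A (k lam)) (k lam) : ℂ)‖ ^ 2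
          ≤ α * ‖A (k lam)‖ ^ 2 + (1 - α) * ‖adjoint A (k lam)‖ ^ 2 := by
        have e1 : ‖(inner ℂ (A (k lam)) (k lam) : ℂ)‖ ^ 2 ≤ ‖A (k lam)‖ ^ 2 := by
          exact pow_le_pow_left₀ (norm_nonneg _) (h1 lam) 2
        have e2 : ‖(inner ℂ (A (k lam)) (k lam) : ℂ)‖ ^ 2 ≤ ‖adjoint A (k lam)‖ ^ 2 := by
          exact pow_le_pow_left₀ (norm_nonneg _) (h2 lam) 2
        nlinarith
      refine hb.trans ?_
      have := le_ber k hk S lam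
      rw [hSval (k lam)] at this
      rw [Complex.norm_real] at this
      refine le_trans (le_abs_self _) this
    -- now sup
    have hberS : 0 ≤ ber k S := ber_nonneg k hk S
    have hsup : ber k A ≤ Real.sqrt (ber k S) := by
      refine ciSup_le fun lam => ?_
      have := key lam
      nlinarith [Real.sq_sqrt hberS, Real.sqrt_nonneg (ber k S), norm_nonneg
        (inner ℂ (A (k lam)) (k lam) : ℂ)]
    have hA0 : 0 ≤ ber k A := ber_nonneg k hk A
    nlinarith [Real.sq_sqrt hberS, Real.sqrt_nonneg (ber k S)]
  · set S := adjoint A * A + A * adjoint A with hS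
    have hSval : ∀ x : H, (inner ℂ (S x) x : ℂ) =
        ((‖A x‖ ^ 2 + ‖adjoint A x‖ ^ 2 : ℝ) : ℂ) := by
      intro x
      simp only [hS, ContinuousLinearMap.add_apply, inner_add_left, hAA, hAAs]
      push_cast
      ring
    have key : ∀ lam : Ω, ‖(inner ℂ (A (k lam)) (k lam) : ℂ)‖ ^ 2 ≤ (1 / 2 : ℝ) * ber k S := by
      intro lam
      have hb : ‖(inner ℂ (A (k lam)) (k lam) : ℂ)‖ ^ 2
          ≤ (1 / 2 : ℝ) * (‖A (k lam)‖ ^ 2 + ‖adjoint A (k lam)‖ ^ 2) := by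
        have e1 : ‖(inner ℂ (A (k lam)) (k lam) : ℂ)‖ ^ 2 ≤ ‖A (k lam)‖ ^ 2 := by
          exact pow_le_pow_left₀ (norm_nonneg _) (h1 lam) 2
        have e2 : ‖(inner ℂ (A (k lam)) (k lam) : ℂ)‖ ^ 2 ≤ ‖adjoint A (k lam)‖ ^ 2 := by
          exact pow_le_pow_left₀ (norm_nonneg _) (h2 lam) 2
        nlinarith
      refine hb.trans ?_
      have := le_ber k hk S lam
      rw [hSval (k lam), Complex.norm_real] at this
      have := le_trans (le_abs_self _) this
      linarith
    have hberS : 0 ≤ ber k S := ber_nonneg k hk S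
    have hsup : ber k A ≤ Real.sqrt ((1 / 2 : ℝ) * ber k S) := by
      refine ciSup_le fun lam => ?_
      have := key lam
      nlinarith [Real.sq_sqrt (by linarith : (0:ℝ) ≤ (1/2 : ℝ) * ber k S),
        Real.sqrt_nonneg ((1/2 : ℝ) * ber k S),
        norm_nonneg (inner ℂ (A (k lam)) (k lam) : ℂ)]
    have hA0 : 0 ≤ ber k A := ber_nonneg k hk A
    nlinarith [Real.sq_sqrt (by linarith : (0:ℝ) ≤ (1/2 : ℝ) * ber k S),
      Real.sqrt_nonneg ((1/2 : ℝ) * ber k S)]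
end

section
/- Let A be a bounded linear operator on H with A² = 0. Then for every real number r ≥ 1, ber(A)^{2r} ≤ (1/4)·ber(|A|^{2r} + |A*|^{2r}). -/
set_option synthInstance.maxHeartbeats 1000000
set_option maxHeartbeats 1000000

open scoped NNReal
open ContinuousLinearMap

section Aux

variable {H : Type*} [NormedAddCommGroup H] [InnerProductSpace ℂ H] [CompleteSpace H]

local notation "⟪" x ", " y "⟫" => (inner ℂ x y : ℂ)

private lemma re_inner_le_of_le {T₁ T₂ : H →L[ℂ] H} (h : T₁ ≤ T₂) (v : H) :
    RCLike.re ⟪T₁ v, v⟫ ≤ RCLike.re ⟪T₂ v, v⟫ := by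
  have h2 := ((ContinuousLinearMap.le_def T₁ T₂).mp h).2 v
  rw [ContinuousLinearMap.reApplyInnerSelf, ContinuousLinearMap.sub_apply,
    inner_sub_left, map_sub, sub_nonneg] at h2
  exact h2

private lemma nonneg_inner {T : H →L[ℂ] H} (h : 0 ≤ T) (v : H) :
    0 ≤ RCLike.re ⟪T v, v⟫ := by
  simpa using re_inner_le_of_le h v

private lemma re_inner_smul_apply (c : ℝ) (S : H →L[ℂ] H) (v : H) :
    RCLike.re ⟪(c • S) v, v⟫ = c * RCLike.re ⟪S v, v⟫ := by
  rw [ContinuousLinearMap.smul_apply, RCLike.real_smul_eq_coe_smul (K := ℂ),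
    inner_smul_real_left, RCLike.smul_re]

private lemma sa_of_nonneg {T : H →L[ℂ] H} (h : 0 ≤ T) : IsSelfAdjoint T :=
  ((ContinuousLinearMap.nonneg_iff_isPositive T).mp h).isSelfAdjoint

private lemma cfc_real_eq_rpow (S : H →L[ℂ] H) (hS : 0 ≤ S) (r : ℝ) (hr : 0 < r) :
    CFC.rpow S r = cfc (fun x : ℝ => x ^ r) S := by
  rw [show CFC.rpow S r = cfc (fun x : ℝ≥0 => x ^ r) S from rfl, cfc_nnreal_eq_real _ _ hS]
  apply cfc_congr
  intro x hx
  have hx' : (0:ℝ) ≤ x := spectrum_nonneg_of_nonneg hS hx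
  simp only [NNReal.coe_rpow, Real.coe_toNNReal x hx']

private lemma rpow_contOn (S : H →L[ℂ] H) (r : ℝ) (hr : 0 < r) :
    ContinuousOn (fun x : ℝ => x ^ r) (spectrum ℝ S) := fun x _ =>
  (Real.continuousAt_rpow_const x r (Or.inr hr.le)).continuousWithinAt

private lemma tangent_real {t : ℝ} (ht : 0 < t) {r : ℝ} (hr : 1 ≤ r) {x : ℝ} (hx : 0 ≤ x) :
    r * t ^ (r - 1) * x ≤ x ^ r + (r - 1) * t ^ r := by
  have htr : (0:ℝ) < t ^ r := Real.rpow_pos_of_pos ht r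
  have h := one_add_mul_self_le_rpow_one_add (s := x / t - 1) (by
    have : 0 ≤ x / t := div_nonneg hx ht.le
    linarith) hr
  have h1 : (1:ℝ) + (x / t - 1) = x / t := by ring
  rw [h1] at h
  have h2 : (x / t) ^ r = x ^ r / t ^ r := Real.div_rpow hx ht.le r
  have h4 : (1 + r * (x / t - 1)) * t ^ r ≤ x ^ r := by
    calc (1 + r * (x / t - 1)) * t ^ r ≤ (x / t) ^ r * t ^ r :=
          mul_le_mul_of_nonneg_right h htr.le
      _ = x ^ r := by rw [h2, div_mul_cancel₀ _ (ne_of_gt htr)]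
  have key3 : t ^ (r - 1) * t = t ^ r := by
    rw [Real.rpow_sub ht, Real.rpow_one, div_mul_cancel₀ _ (ne_of_gt ht)]
  have h5 : t ^ r * (x / t) = t ^ (r - 1) * x := by
    rw [← key3]; field_simp
  nlinarith [h4, h5, key3]

private lemma mccarthy (S : H →L[ℂ] H) (hS : 0 ≤ S) (r : ℝ) (hr : 1 ≤ r) (v : H)
    (hv : ‖v‖ ≤ 1) :
    (RCLike.re ⟪S v, v⟫) ^ r ≤ RCLike.re ⟪CFC.rpow S r v, v⟫ := by
  have hr0 : (0:ℝ) < r := lt_of_lt_of_le one_pos hr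
  have hSsa : IsSelfAdjoint S := sa_of_nonneg hS
  have hpos : 0 ≤ RCLike.re ⟪CFC.rpow S r v, v⟫ := nonneg_inner CFC.rpow_nonneg v
  set t := RCLike.re ⟪S v, v⟫ with ht
  have ht0 : 0 ≤ t := nonneg_inner hS v
  rcases eq_or_lt_of_le ht0 with h0 | htpos
  · rw [← h0, Real.zero_rpow (ne_of_gt hr0)]; exact hpos
  have hop : cfc (fun x : ℝ => (r * t ^ (r - 1)) * x) S
      ≤ cfc (fun x : ℝ => x ^ r + (r - 1) * t ^ r) S := by
    refine cfc_mono (fun x hx => ?_) (by fun_prop) ((rpow_contOn S r hr0).add continuousOn_const)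
    exact tangent_real htpos hr (spectrum_nonneg_of_nonneg hS hx)
  rw [cfc_const_mul_id _ S hSsa,
    cfc_add_const ((r - 1) * t ^ r) (fun x : ℝ => x ^ r) S (rpow_contOn S r hr0) hSsa,
    ← cfc_real_eq_rpow S hS r hr0] at hop
  have h6 := re_inner_le_of_le hop v
  rw [re_inner_smul_apply] at h6
  have h7 : RCLike.re ⟪(CFC.rpow S r + algebraMap ℝ (H →L[ℂ] H) ((r - 1) * t ^ r)) v, v⟫
      = RCLike.re ⟪CFC.rpow S r v, v⟫ + (r - 1) * t ^ r * ‖v‖ ^ 2 := by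
    rw [ContinuousLinearMap.add_apply, inner_add_left, map_add,
      Algebra.algebraMap_eq_smul_one]
    congr 1
    rw [re_inner_smul_apply, ContinuousLinearMap.one_apply, inner_self_eq_norm_sq]
  rw [h7] at h6
  have htr : t ^ (r - 1) * t = t ^ r := by
    rw [Real.rpow_sub htpos, Real.rpow_one, div_mul_cancel₀ _ (ne_of_gt htpos)]
  have htrpos : 0 ≤ t ^ r := Real.rpow_nonneg ht0 r
  have hv2 : ‖v‖ ^ 2 ≤ 1 := by
    have := norm_nonneg v
    nlinarith
  nlinarith [h6, htr, mul_nonneg (sub_nonneg.mpr hr) htrpos]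

private lemma pos_apply_eq_zero {T : H →L[ℂ] H} (hT : 0 ≤ T) {u : H}
    (h : RCLike.re ⟪T u, u⟫ = 0) : T u = 0 := by
  set B := CFC.sqrt T with hB
  have hBB : B * B = T := CFC.sqrt_mul_sqrt_self T hT
  have hBadj : ContinuousLinearMap.adjoint B = B := by
    rw [← ContinuousLinearMap.star_eq_adjoint]
    exact sa_of_nonneg (CFC.sqrt_nonneg T)
  have key : ⟪T u, u⟫ = ⟪B u, B u⟫ := by
    conv_lhs => rw [← hBB, ContinuousLinearMap.mul_apply, ← hBadj]
    rw [ContinuousLinearMap.adjoint_inner_left, hBadj]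
  have h2 : ‖B u‖ ^ 2 = 0 := by
    rw [← inner_self_eq_norm_sq (𝕜 := ℂ), ← key, h]
  have h3 : B u = 0 := by
    have := pow_eq_zero_iff (n := 2) (by norm_num) |>.mp h2
    exact norm_eq_zero.mp this
  rw [← hBB, ContinuousLinearMap.mul_apply, h3, map_zero]

private lemma rpow_ker (S : H →L[ℂ] H) (hS : 0 ≤ S) (r : ℝ) (hr : 1 ≤ r) {u : H}
    (hu : S u = 0) : CFC.rpow S r u = 0 := by
  have hr0 : (0:ℝ) < r := lt_of_lt_of_le one_pos hr
  have hSsa : IsSelfAdjoint S := sa_of_nonneg hS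
  have hop : cfc (fun x : ℝ => x ^ r) S ≤ cfc (fun x : ℝ => ((‖S‖ * ‖(1 : H →L[ℂ] H)‖) ^ (r - 1)) * x) S := by
    refine cfc_mono (fun x hx => ?_) (rpow_contOn S r hr0) (by fun_prop)
    have hx0 : (0:ℝ) ≤ x := spectrum_nonneg_of_nonneg hS hx
    have hxS : x ≤ ‖S‖ * ‖(1 : H →L[ℂ] H)‖ := by
      have := spectrum.norm_le_norm_mul_of_mem hx
      rwa [Real.norm_of_nonneg hx0] at this
    rcases eq_or_lt_of_le hx0 with h0 | hxpos
    · rw [← h0, Real.zero_rpow (ne_of_gt hr0), mul_zero]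
    · have hxr : x ^ r = x ^ (r - 1) * x := by
        rw [Real.rpow_sub hxpos, Real.rpow_one, div_mul_cancel₀ _ (ne_of_gt hxpos)]
      rw [hxr]
      exact mul_le_mul_of_nonneg_right
        (Real.rpow_le_rpow hx0 hxS (by linarith)) hx0
  rw [cfc_const_mul_id _ S hSsa, ← cfc_real_eq_rpow S hS r hr0] at hop
  have h1 := re_inner_le_of_le hop u
  rw [re_inner_smul_apply, hu, inner_zero_left, map_zero, mul_zero] at h1
  have h2 : RCLike.re ⟪CFC.rpow S r u, u⟫ = 0 :=
    le_antisymm h1 (nonneg_inner CFC.rpow_nonneg u)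
  exact pos_apply_eq_zero CFC.rpow_nonneg h2

private lemma inner_split {T : H →L[ℂ] H} (hT : 0 ≤ T) {u v : H} (hu : T u = 0) :
    ⟪T (u + v), u + v⟫ = ⟪T v, v⟫ := by
  have hTadj : ContinuousLinearMap.adjoint T = T := by
    rw [← ContinuousLinearMap.star_eq_adjoint]; exact sa_of_nonneg hT
  have hcross : ⟪T v, u⟫ = 0 := by
    conv_lhs => rw [← hTadj]
    rw [ContinuousLinearMap.adjoint_inner_left, hu, inner_zero_right]
  rw [map_add, hu, zero_add, inner_add_right, hcross, zero_add]

private lemma nonneg_adj_mul (B : H →L[ℂ] H) : (0 : H →L[ℂ] H) ≤ adjoint B * B := by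
  rw [ContinuousLinearMap.nonneg_iff_isPositive]
  refine ⟨?_, fun w => ?_⟩
  · rw [← ContinuousLinearMap.isSelfAdjoint_iff_isSymmetric, isSelfAdjoint_iff, star_mul, ContinuousLinearMap.star_eq_adjoint,
      ContinuousLinearMap.star_eq_adjoint, ContinuousLinearMap.adjoint_adjoint]
  · rw [ContinuousLinearMap.reApplyInnerSelf, ContinuousLinearMap.mul_apply,
      ContinuousLinearMap.adjoint_inner_left, inner_self_eq_norm_sq]
    positivity

private lemma pointwise_bound (A : H →L[ℂ] H) (hA : A * A = 0) (r : ℝ) (hr : 1 ≤ r)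
    (x : H) (hx : ‖x‖ = 1) :
    ‖⟪A x, x⟫‖ ^ (2 * r) ≤ (1 / 4 : ℝ) *
      RCLike.re ⟪(CFC.rpow (opAbs A) (2 * r) + CFC.rpow (opAbs (adjoint A)) (2 * r)) x, x⟫ := by
  have hr0 : (0:ℝ) < r := lt_of_lt_of_le one_pos hr
  set S₁ : H →L[ℂ] H := adjoint A * A with hS₁def
  set S₂ : H →L[ℂ] H := A * adjoint A with hS₂def
  have hS₁ : (0 : H →L[ℂ] H) ≤ S₁ := nonneg_adj_mul A
  have hS₂ : (0 : H →L[ℂ] H) ≤ S₂ := by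
    have := nonneg_adj_mul (adjoint A)
    rwa [ContinuousLinearMap.adjoint_adjoint] at this
  have hP : CFC.rpow (opAbs A) (2 * r) = CFC.rpow S₁ r := by
    rw [opAbs, CFC.rpow_eq_pow, CFC.rpow_eq_pow, CFC.sqrt_eq_rpow,
      CFC.rpow_rpow_of_exponent_nonneg S₁ (1/2) (2*r) (by norm_num) (by linarith) hS₁,
      show (1/2 : ℝ) * (2*r) = r by ring]
  have hQ : CFC.rpow (opAbs (adjoint A)) (2 * r) = CFC.rpow S₂ r := by
    rw [opAbs, ContinuousLinearMap.adjoint_adjoint, CFC.rpow_eq_pow, CFC.rpow_eq_pow,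
      CFC.sqrt_eq_rpow,
      CFC.rpow_rpow_of_exponent_nonneg S₂ (1/2) (2*r) (by norm_num) (by linarith) hS₂,
      show (1/2 : ℝ) * (2*r) = r by ring]
  have hAA : ∀ y, A (A y) = 0 := fun y => by
    have := congrArg (fun T : H →L[ℂ] H => T y) hA
    simpa [ContinuousLinearMap.mul_apply] using this
  set K : Submodule ℂ H := LinearMap.ker (A : H →ₗ[ℂ] H) with hK
  haveI : CompleteSpace K := (ContinuousLinearMap.isClosed_ker A).completeSpace_coe
  set u : H := (K.orthogonalProjectionOnto x : H) with hu
  set v : H := x - u with hv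
  have hxuv : x = u + v := by rw [hv]; abel
  have huK : u ∈ K := SetLike.coe_mem _
  have hAu : A u = 0 := huK
  have hvK : v ∈ Kᗮ := K.sub_starProjection_mem_orthogonal x
  have hAv_mem : A v ∈ K := LinearMap.mem_ker.mpr (hAA v)
  have hinner : ⟪A x, x⟫ = ⟪A v, u⟫ := by
    conv_lhs => rw [hxuv]
    rw [map_add, hAu, zero_add, inner_add_right,
      Submodule.inner_right_of_mem_orthogonal hAv_mem hvK, add_zero]
  have hadj_v : ContinuousLinearMap.adjoint A v = 0 := by
    have h1 : ⟪ContinuousLinearMap.adjoint A v, ContinuousLinearMap.adjoint A v⟫ = 0 := by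
      rw [ContinuousLinearMap.adjoint_inner_left]
      exact Submodule.inner_left_of_mem_orthogonal (LinearMap.mem_ker.mpr (hAA _)) hvK
    exact inner_self_eq_zero.mp h1
  have huv_orth : ⟪u, v⟫ = 0 := Submodule.inner_right_of_mem_orthogonal huK hvK
  have hpyth : ‖u‖^2 + ‖v‖^2 = 1 := by
    have hns := norm_add_sq (𝕜 := ℂ) u v
    rw [← hxuv, hx, huv_orth] at hns
    simp at hns
    linarith
  have hu1 : ‖u‖ ≤ 1 := by nlinarith [norm_nonneg u, norm_nonneg v]
  have hv1 : ‖v‖ ≤ 1 := by nlinarith [norm_nonneg u, norm_nonneg v]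
  have hm1 : ‖⟪A x, x⟫‖ ≤ ‖A v‖ * ‖u‖ := by
    rw [hinner]; exact norm_inner_le_norm _ _
  have hm2 : ‖⟪A x, x⟫‖ ≤ ‖v‖ * ‖ContinuousLinearMap.adjoint A u‖ := by
    rw [hinner, ← ContinuousLinearMap.adjoint_inner_right]
    exact norm_inner_le_norm _ _
  have hS₁v : RCLike.re ⟪S₁ v, v⟫ = ‖A v‖^2 := by
    rw [hS₁def, ContinuousLinearMap.mul_apply, ContinuousLinearMap.adjoint_inner_left,
      inner_self_eq_norm_sq]
  have hS₂u : RCLike.re ⟪S₂ u, u⟫ = ‖ContinuousLinearMap.adjoint A u‖^2 := by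
    rw [hS₂def, ContinuousLinearMap.mul_apply, ← ContinuousLinearMap.adjoint_inner_right,
      inner_self_eq_norm_sq]
  have hS₁u : S₁ u = 0 := by
    rw [hS₁def, ContinuousLinearMap.mul_apply, hAu, map_zero]
  have hS₂v : S₂ v = 0 := by
    rw [hS₂def, ContinuousLinearMap.mul_apply, hadj_v, map_zero]
  set a : ℝ := ‖A v‖ with ha
  set b : ℝ := ‖ContinuousLinearMap.adjoint A u‖ with hb
  set s : ℝ := ‖u‖
  set t : ℝ := ‖v‖
  have ha0 : 0 ≤ a := norm_nonneg _
  have hb0 : 0 ≤ b := norm_nonneg _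
  have hs0 : 0 ≤ s := norm_nonneg _
  have ht0 : 0 ≤ t := norm_nonneg _
  have hP1 : a ^ (2*r) ≤ RCLike.re ⟪CFC.rpow S₁ r x, x⟫ := by
    have h1 : a ^ (2*r) = (RCLike.re ⟪S₁ v, v⟫) ^ r := by
      rw [hS₁v, ← Real.rpow_natCast a 2, ← Real.rpow_mul ha0]
      norm_num
    calc a ^ (2*r) = (RCLike.re ⟪S₁ v, v⟫) ^ r := h1
      _ ≤ RCLike.re ⟪CFC.rpow S₁ r v, v⟫ := mccarthy S₁ hS₁ r hr v hv1
      _ = RCLike.re ⟪CFC.rpow S₁ r x, x⟫ := by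
          conv_rhs => rw [hxuv]
          rw [inner_split (T := CFC.rpow S₁ r) CFC.rpow_nonneg (rpow_ker S₁ hS₁ r hr hS₁u)]
  have hQ1 : b ^ (2*r) ≤ RCLike.re ⟪CFC.rpow S₂ r x, x⟫ := by
    have h1 : b ^ (2*r) = (RCLike.re ⟪S₂ u, u⟫) ^ r := by
      rw [hS₂u, ← Real.rpow_natCast b 2, ← Real.rpow_mul hb0]
      norm_num
    have hxvu : x = v + u := by rw [hxuv]; abel
    calc b ^ (2*r) = (RCLike.re ⟪S₂ u, u⟫) ^ r := h1
      _ ≤ RCLike.re ⟪CFC.rpow S₂ r u, u⟫ := mccarthy S₂ hS₂ r hr u hu1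
      _ = RCLike.re ⟪CFC.rpow S₂ r x, x⟫ := by
          conv_rhs => rw [hxvu]
          rw [inner_split (T := CFC.rpow S₂ r) CFC.rpow_nonneg (rpow_ker S₂ hS₂ r hr hS₂v)]
  have key : ‖⟪A x, x⟫‖ ^ (2*r) ≤ (1/4 : ℝ) * (a^(2*r) + b^(2*r)) := by
    set m : ℝ := ‖⟪A x, x⟫‖ with hm
    have hm0 : 0 ≤ m := norm_nonneg _
    have hst : s * t ≤ 1/2 := by nlinarith [sq_nonneg (s - t)]
    have hmm : m * m ≤ (a * s) * (t * b) :=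
      mul_le_mul hm1 hm2 hm0 (mul_nonneg ha0 hs0)
    have hm2' : m^2 ≤ (s*t) * (a*b) := by nlinarith [hmm]
    have h1 : m ^ (2*r) = (m^2) ^ r := by
      rw [← Real.rpow_natCast m 2, ← Real.rpow_mul hm0]
      norm_num
    have h2 : (m^2) ^ r ≤ ((s*t)*(a*b)) ^ r :=
      Real.rpow_le_rpow (sq_nonneg m) hm2' hr0.le
    have h3 : ((s*t)*(a*b)) ^ r = (s*t)^r * (a*b)^r :=
      Real.mul_rpow (by positivity) (by positivity)
    have h4 : (s*t)^r ≤ 1/2 := by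
      calc (s*t)^r ≤ (1/2 : ℝ)^r := Real.rpow_le_rpow (by positivity) hst hr0.le
        _ ≤ (1/2 : ℝ)^(1:ℝ) :=
            Real.rpow_le_rpow_of_exponent_ge (by norm_num) (by norm_num) hr
        _ = 1/2 := Real.rpow_one _
    have h5 : (a*b)^r = a^r * b^r := Real.mul_rpow ha0 hb0
    have ha2 : a^(2*r) = (a^r)^2 := by
      rw [show (2*r : ℝ) = r * 2 by ring, Real.rpow_mul ha0, Real.rpow_two]
    have hb2 : b^(2*r) = (b^r)^2 := by
      rw [show (2*r : ℝ) = r * 2 by ring, Real.rpow_mul hb0, Real.rpow_two]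
    have h6 : a^r * b^r ≤ (a^(2*r) + b^(2*r))/2 := by
      rw [ha2, hb2]
      nlinarith [sq_nonneg (a^r - b^r)]
    have h7 : (s*t)^r * (a*b)^r ≤ (1/2) * ((a^(2*r) + b^(2*r))/2) := by
      rw [h5]
      apply mul_le_mul h4 h6 (by positivity) (by norm_num)
    calc m ^ (2*r) = (m^2)^r := h1
      _ ≤ (s*t)^r * (a*b)^r := h3 ▸ h2
      _ ≤ (1/2) * ((a^(2*r) + b^(2*r))/2) := h7
      _ = (1/4 : ℝ) * (a^(2*r) + b^(2*r)) := by ring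
  have hsum : RCLike.re ⟪(CFC.rpow (opAbs A) (2*r) + CFC.rpow (opAbs (adjoint A)) (2*r)) x, x⟫
      = RCLike.re ⟪CFC.rpow S₁ r x, x⟫ + RCLike.re ⟪CFC.rpow S₂ r x, x⟫ := by
    rw [hP, hQ, ContinuousLinearMap.add_apply, inner_add_left, map_add]
  rw [hsum]
  calc ‖⟪A x, x⟫‖ ^ (2*r) ≤ (1/4 : ℝ) * (a^(2*r) + b^(2*r)) := key
    _ ≤ (1/4 : ℝ) * (RCLike.re ⟪CFC.rpow S₁ r x, x⟫ + RCLike.re ⟪CFC.rpow S₂ r x, x⟫) := by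
        linarith [hP1, hQ1]

end Aux

theorem berezin_power_inequality_square_zero
    {H : Type*} [NormedAddCommGroup H] [InnerProductSpace ℂ H] [CompleteSpace H]
    {Ω : Type*} [Nonempty Ω] (k : Ω → H) (hk : ∀ lam, ‖k lam‖ = 1)
    (A : H →L[ℂ] H) (hA : A * A = 0) (r : ℝ) (hr : 1 ≤ r) :
    ber k A ^ (2 * r) ≤
      (1 / 4 : ℝ) * ber k (CFC.rpow (opAbs A) (2 * r)
        + CFC.rpow (opAbs (adjoint A)) (2 * r)) := by
  have hr0 : (0:ℝ) < r := lt_of_lt_of_le one_pos hr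
  have h2r : (0:ℝ) < 2 * r := by linarith
  set T : H →L[ℂ] H := CFC.rpow (opAbs A) (2 * r) + CFC.rpow (opAbs (adjoint A)) (2 * r) with hT
  set g : Ω → ℝ := fun lam => ‖(inner ℂ (A (k lam)) (k lam) : ℂ)‖ with hg
  set G : Ω → ℝ := fun lam => ‖(inner ℂ (T (k lam)) (k lam) : ℂ)‖ with hG
  have hgbdd : BddAbove (Set.range g) := by
    refine ⟨‖A‖, ?_⟩
    rintro _ ⟨lam, rfl⟩
    calc g lam ≤ ‖A (k lam)‖ * ‖k lam‖ := norm_inner_le_norm _ _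
      _ ≤ (‖A‖ * ‖k lam‖) * ‖k lam‖ :=
          mul_le_mul_of_nonneg_right (A.le_opNorm _) (norm_nonneg _)
      _ = ‖A‖ := by rw [hk lam]; ring
  have hGbdd : BddAbove (Set.range G) := by
    refine ⟨‖T‖, ?_⟩
    rintro _ ⟨lam, rfl⟩
    calc G lam ≤ ‖T (k lam)‖ * ‖k lam‖ := norm_inner_le_norm _ _
      _ ≤ (‖T‖ * ‖k lam‖) * ‖k lam‖ :=
          mul_le_mul_of_nonneg_right (T.le_opNorm _) (norm_nonneg _)
      _ = ‖T‖ := by rw [hk lam]; ring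
  set B : ℝ := (1/4 : ℝ) * ber k T with hB
  have hberT : 0 ≤ ber k T := Real.iSup_nonneg fun lam => norm_nonneg _
  have hB0 : 0 ≤ B := by positivity
  have hlamB : ∀ lam, g lam ^ (2 * r) ≤ B := by
    intro lam
    calc g lam ^ (2 * r)
        ≤ (1/4 : ℝ) * RCLike.re (inner ℂ (T (k lam)) (k lam) : ℂ) :=
          pointwise_bound A hA r hr (k lam) (hk lam)
      _ ≤ (1/4 : ℝ) * G lam := by
          have := RCLike.re_le_norm (inner ℂ (T (k lam)) (k lam) : ℂ)
          linarith
      _ ≤ B := by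
          have : G lam ≤ ber k T := le_ciSup hGbdd lam
          rw [hB]; linarith
  have hsup : ber k A ≤ B ^ (1/(2*r)) := by
    refine ciSup_le fun lam => ?_
    have h1 : g lam = (g lam ^ (2*r)) ^ (1/(2*r)) := by
      rw [← Real.rpow_mul (norm_nonneg _), mul_one_div, div_self (ne_of_gt h2r),
        Real.rpow_one]
    show g lam ≤ B ^ (1/(2*r))
    rw [h1]
    exact Real.rpow_le_rpow (Real.rpow_nonneg (norm_nonneg _) _) (hlamB lam) (by positivity)
  have hberA : 0 ≤ ber k A := Real.iSup_nonneg fun lam => norm_nonneg _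
  calc ber k A ^ (2*r) ≤ (B ^ (1/(2*r))) ^ (2*r) :=
        Real.rpow_le_rpow hberA hsup h2r.le
    _ = B := by
        rw [← Real.rpow_mul hB0, one_div, inv_mul_cancel₀ (ne_of_gt h2r), Real.rpow_one]
end

section
/- Let A be a bounded linear operator on H. Then for every real number r ≥ 1 and every α ∈ [0,1], ber(A)^{2r} ≤ ber(α·((|A| + |A*|)/2)^{2r} + (1−α)·|A|^{2r}). -/
set_option synthInstance.maxHeartbeats 1000000
set_option maxHeartbeats 1000000

open scoped NNReal
open ContinuousLinearMap

section Auxiliary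

variable {H : Type*} [NormedAddCommGroup H] [InnerProductSpace ℂ H] [CompleteSpace H]

omit [CompleteSpace H] in
lemma aux_inner_re_smul_apply (c : ℝ) (T : H →L[ℂ] H) (x : H) :
    (inner ℂ ((c • T) x) x : ℂ).re = c * (inner ℂ (T x) x : ℂ).re := by
  rw [ContinuousLinearMap.smul_apply,
    RCLike.real_smul_eq_coe_smul (K := ℂ) c (T x), inner_smul_left]
  simp [Complex.conj_ofReal]

omit [CompleteSpace H] in
lemma aux_inner_re_add_apply (S T : H →L[ℂ] H) (x : H) :
    (inner ℂ ((S + T) x) x : ℂ).re = (inner ℂ (S x) x : ℂ).re + (inner ℂ (T x) x : ℂ).re := by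
  simp [inner_add_left]

lemma aux_inner_re_nonneg {T : H →L[ℂ] H} (h : 0 ≤ T) (x : H) :
    0 ≤ (inner ℂ (T x) x : ℂ).re :=
  ((ContinuousLinearMap.nonneg_iff_isPositive T).mp h).re_inner_nonneg_left x

lemma aux_inner_re_mono {T S : H →L[ℂ] H} (h : T ≤ S) (x : H) :
    (inner ℂ (T x) x : ℂ).re ≤ (inner ℂ (S x) x : ℂ).re := by
  have := ((ContinuousLinearMap.le_def T S).mp h).re_inner_nonneg_left x
  simp only [ContinuousLinearMap.reApplyInnerSelf_apply, ContinuousLinearMap.sub_apply,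
    inner_sub_left, map_sub, RCLike.re_to_complex] at this
  linarith

lemma aux_smul_nonneg {c : ℝ} (hc : 0 ≤ c) {T : H →L[ℂ] H} (hT : 0 ≤ T) :
    0 ≤ c • T := by
  rw [ContinuousLinearMap.nonneg_iff_isPositive] at hT ⊢
  refine ⟨?_, fun x => ?_⟩
  · rw [← ContinuousLinearMap.isSelfAdjoint_iff_isSymmetric]
    exact IsSelfAdjoint.smul (star_trivial c) hT.isSelfAdjoint
  · rw [ContinuousLinearMap.reApplyInnerSelf_apply]
    have := hT.2 x
    rw [ContinuousLinearMap.reApplyInnerSelf_apply] at this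
    calc (0:ℝ) ≤ c * RCLike.re (inner ℂ (T x) x : ℂ) := mul_nonneg hc this
      _ = _ := (aux_inner_re_smul_apply c T x).symm

lemma aux_cfc_sqrt_eq (a : H →L[ℂ] H) (ha : 0 ≤ a) : CFC.sqrt a = cfc Real.sqrt a := by
  rw [CFC.sqrt_eq_cfc, cfc_nnreal_eq_real _ a ha]
  refine cfc_congr fun x hx => ?_
  have hx' : 0 ≤ x := spectrum_nonneg_of_nonneg ha hx
  simp [Real.coe_sqrt, Real.coe_toNNReal x hx']

lemma aux_cfc_rpow_eq (a : H →L[ℂ] H) (ha : 0 ≤ a) (y : ℝ) :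
    CFC.rpow a y = cfc (fun t : ℝ => t ^ y) a := by
  rw [CFC.rpow, cfc_nnreal_eq_real _ a ha]
  refine cfc_congr fun t ht => ?_
  have ht' : 0 ≤ t := spectrum_nonneg_of_nonneg ha ht
  simp [NNReal.coe_rpow, Real.coe_toNNReal t ht']

lemma aux_pow_intertwine (A : H →L[ℂ] H) (n : ℕ) :
    A * (adjoint A * A)^n = (A * adjoint A)^n * A := by
  induction n with
  | zero => simp
  | succ n ih =>
      calc A * (adjoint A * A)^(n+1) = (A * (adjoint A * A)^n) * (adjoint A * A) := by
            rw [pow_succ, ← mul_assoc]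
        _ = (A * adjoint A)^n * (A * adjoint A) * A := by
            rw [ih]; simp only [mul_assoc]
        _ = (A * adjoint A)^(n+1) * A := by rw [pow_succ]

open Polynomial in
lemma aux_aeval_intertwine (A : H →L[ℂ] H) (q : ℝ[X]) :
    A * aeval (adjoint A * A) q = aeval (A * adjoint A) q * A := by
  induction q using Polynomial.induction_on with
  | C r => simp [Algebra.commutes]
  | add p q hp hq => rw [map_add, map_add, mul_add, add_mul, hp, hq]
  | monomial n r _ =>
      simp only [map_mul, aeval_C, map_pow, aeval_X]
      calc A * (algebraMap ℝ (H →L[ℂ] H) r * (adjoint A * A) ^ (n+1))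
          = algebraMap ℝ (H →L[ℂ] H) r * (A * (adjoint A * A) ^ (n+1)) := by
            rw [← mul_assoc, ← Algebra.commutes, mul_assoc]
        _ = algebraMap ℝ (H →L[ℂ] H) r * (A * adjoint A) ^ (n+1) * A := by
            rw [aux_pow_intertwine, mul_assoc]

/-- Intertwining property of the continuous functional calculus:
`A f(A*A) = f(AA*) A`. -/
lemma aux_cfc_intertwine (A : H →L[ℂ] H) (f : ℝ → ℝ) (hf : Continuous f) :
    A * cfc f (adjoint A * A) = cfc f (A * adjoint A) * A := by
  set P := adjoint A * A with hPdef
  set Q := A * adjoint A with hQdef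
  have hP0 : (0:H →L[ℂ] H) ≤ P := by
    simpa [ContinuousLinearMap.star_eq_adjoint] using star_mul_self_nonneg A
  have hQ0 : (0:H →L[ℂ] H) ≤ Q := by
    simpa [ContinuousLinearMap.star_eq_adjoint] using mul_star_self_nonneg A
  set R : ℝ := max ‖P‖ ‖Q‖ * ‖(1:H →L[ℂ] H)‖ with hRdef
  have hR : (0:ℝ) ≤ R :=
    mul_nonneg (le_trans (norm_nonneg P) (le_max_left _ _)) (norm_nonneg _)
  have hsub : ∀ (a : H →L[ℂ] H), 0 ≤ a → ‖a‖ ≤ max ‖P‖ ‖Q‖ → spectrum ℝ a ⊆ Set.Icc 0 R := by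
    intro a ha hna x hx
    refine ⟨spectrum_nonneg_of_nonneg ha hx, ?_⟩
    refine le_trans (le_trans (le_abs_self x) (spectrum.norm_le_norm_mul_of_mem hx)) ?_
    exact mul_le_mul_of_nonneg_right hna (norm_nonneg _)
  have hsP : spectrum ℝ P ⊆ Set.Icc 0 R := hsub P hP0 (le_max_left _ _)
  have hsQ : spectrum ℝ Q ⊆ Set.Icc 0 R := hsub Q hQ0 (le_max_right _ _)
  set proj : ℝ → Set.Icc (0:ℝ) R := Set.projIcc 0 R hR with hproj
  have hprojc : Continuous proj := continuous_projIcc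
  have key : ∀ (a : H →L[ℂ] H), spectrum ℝ a ⊆ Set.Icc 0 R →
      LipschitzWith 1 (fun g : C(Set.Icc (0:ℝ) R, ℝ) => cfc (fun t => g (proj t)) a) := by
    intro a hs
    refine LipschitzWith.of_dist_le_mul fun g g' => ?_
    rw [dist_eq_norm, dist_eq_norm, NNReal.coe_one, one_mul]
    have h1 : ContinuousOn (fun t => g (proj t)) (spectrum ℝ a) :=
      (g.continuous.comp hprojc).continuousOn
    have h2 : ContinuousOn (fun t => g' (proj t)) (spectrum ℝ a) :=
      (g'.continuous.comp hprojc).continuousOn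
    rw [← cfc_sub _ _ a h1 h2]
    refine norm_cfc_le (norm_nonneg _) fun x hx => ?_
    calc ‖g (proj x) - g' (proj x)‖ = ‖(g - g') (proj x)‖ := by simp
      _ ≤ ‖g - g'‖ := ContinuousMap.norm_coe_le_norm _ _
  set F : C(Set.Icc (0:ℝ) R, ℝ) → (H →L[ℂ] H) :=
    fun g => A * cfc (fun t => g (proj t)) P with hF
  set G : C(Set.Icc (0:ℝ) R, ℝ) → (H →L[ℂ] H) :=
    fun g => cfc (fun t => g (proj t)) Q * A with hG
  have hFc : Continuous F := (continuous_mul_left A).comp (key P hsP).continuous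
  have hGc : Continuous G := (continuous_mul_right A).comp (key Q hsQ).continuous
  have hdense : Dense (polynomialFunctions (Set.Icc (0:ℝ) R) : Set C(Set.Icc (0:ℝ) R, ℝ)) := by
    have h2 := congrArg (SetLike.coe) (polynomialFunctions_closure_eq_top 0 R)
    rw [Subalgebra.topologicalClosure_coe] at h2
    rw [dense_iff_closure_eq, h2]
    rfl
  have heqon : Set.EqOn F G
      (polynomialFunctions (Set.Icc (0:ℝ) R) : Set C(Set.Icc (0:ℝ) R, ℝ)) := by
    rintro g hg
    rw [SetLike.mem_coe, polynomialFunctions, Subalgebra.mem_map] at hg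
    obtain ⟨q, -, rfl⟩ := hg
    have hqP : cfc (fun t => (Polynomial.toContinuousMapOnAlgHom _ q) (proj t)) P
        = cfc q.eval P := by
      refine cfc_congr fun x hx => ?_
      simp [hproj, Set.projIcc_of_mem hR (hsP hx)]
    have hqQ : cfc (fun t => (Polynomial.toContinuousMapOnAlgHom _ q) (proj t)) Q
        = cfc q.eval Q := by
      refine cfc_congr fun x hx => ?_
      simp [hproj, Set.projIcc_of_mem hR (hsQ hx)]
    simp only [hF, hG, hqP, hqQ]
    rw [cfc_polynomial q P (IsSelfAdjoint.of_nonneg hP0),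
      cfc_polynomial q Q (IsSelfAdjoint.of_nonneg hQ0)]
    exact aux_aeval_intertwine A q
  have heq : F = G := Continuous.ext_on hdense hFc hGc heqon
  have happ := congrFun heq ⟨fun t => f ↑t, hf.comp continuous_subtype_val⟩
  simp only [hF, hG, ContinuousMap.coe_mk] at happ
  have hfP : cfc (fun t => f ↑(proj t)) P = cfc f P := by
    refine cfc_congr fun x hx => ?_
    simp [hproj, Set.projIcc_of_mem hR (hsP hx)]
  have hfQ : cfc (fun t => f ↑(proj t)) Q = cfc f Q := by
    refine cfc_congr fun x hx => ?_
    simp [hproj, Set.projIcc_of_mem hR (hsQ hx)]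
  rw [hfP, hfQ] at happ
  exact happ

/-- tangent line inequality for `rpow`. -/
lemma aux_tangent_rpow {s t p : ℝ} (hs : 0 < s) (ht : 0 ≤ t) (hp : 1 ≤ p) :
    s ^ p + p * s ^ (p - 1) * (t - s) ≤ t ^ p := by
  have hu : -1 ≤ t / s - 1 := by
    have : 0 ≤ t / s := div_nonneg ht hs.le
    linarith
  have hb := one_add_mul_self_le_rpow_one_add hu hp
  have hts : t = s * (1 + (t / s - 1)) := by field_simp; ring
  have hkey : s ^ (p - 1) * s = s ^ p := by
    rw [← Real.rpow_add_one hs.ne' (p-1)]; ring_nf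
  calc s ^ p + p * s ^ (p - 1) * (t - s)
      = s ^ p * (1 + p * (t / s - 1)) := by
        rw [← hkey]; field_simp
    _ ≤ s ^ p * (1 + (t / s - 1)) ^ p :=
        mul_le_mul_of_nonneg_left hb (Real.rpow_nonneg hs.le p)
    _ = t ^ p := by
        rw [← Real.mul_rpow hs.le (by linarith : (0:ℝ) ≤ 1 + (t / s - 1))]
        rw [← hts]

/-- McCarthy's inequality: `⟨Tx,x⟩ ^ p ≤ ⟨T^p x, x⟩` for a positive operator `T`,
a unit vector `x`, and `p ≥ 1`. -/
lemma aux_mccarthy {T : H →L[ℂ] H} (hT : 0 ≤ T) {x : H} (hx : ‖x‖ = 1) {p : ℝ} (hp : 1 ≤ p) :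
    ((inner ℂ (T x) x : ℂ).re) ^ p ≤ (inner ℂ (CFC.rpow T p x) x : ℂ).re := by
  have hsa : IsSelfAdjoint T := IsSelfAdjoint.of_nonneg hT
  set s := (inner ℂ (T x) x : ℂ).re with hsdef
  have hs0 : 0 ≤ s := aux_inner_re_nonneg hT x
  have hrp : CFC.rpow T p = cfc (fun t : ℝ => t ^ p) T := aux_cfc_rpow_eq T hT p
  have hp0 : (0:ℝ) ≤ p := by linarith
  have hcont : ContinuousOn (fun t : ℝ => t ^ p) (spectrum ℝ T) :=
    (Real.continuous_rpow_const hp0).continuousOn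
  rcases eq_or_lt_of_le hs0 with h0 | h0
  · rw [← h0, Real.zero_rpow (by linarith : p ≠ 0), hrp]
    refine aux_inner_re_nonneg (cfc_nonneg fun t ht => ?_) x
    exact Real.rpow_nonneg (spectrum_nonneg_of_nonneg hT ht) p
  · have hkey : s ^ (p - 1) * s = s ^ p := by
      rw [← Real.rpow_add_one h0.ne' (p-1)]; ring_nf
    have hop : (0:H →L[ℂ] H) ≤
        cfc (fun t : ℝ => t ^ p - ((s ^ p - p * s ^ (p-1) * s) + (p * s ^ (p-1)) * t)) T := by
      refine cfc_nonneg fun t ht => ?_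
      have ht' : 0 ≤ t := spectrum_nonneg_of_nonneg hT ht
      have := aux_tangent_rpow h0 ht' hp
      nlinarith
    have hrepr : cfc (fun t : ℝ => t ^ p - ((s ^ p - p * s ^ (p-1) * s) + (p * s ^ (p-1)) * t)) T
        = CFC.rpow T p - ((s ^ p - p * s ^ (p-1) * s) • (1:H →L[ℂ] H) + (p * s ^ (p-1)) • T) := by
      rw [cfc_sub _ _ T hcont (by fun_prop)]
      congr 1
      · exact hrp.symm
      · rw [cfc_add T _ _ (by fun_prop) (by fun_prop), cfc_const _ _ hsa,
          cfc_const_mul_id _ T hsa, Algebra.algebraMap_eq_smul_one]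
    rw [hrepr] at hop
    have h2 := aux_inner_re_nonneg hop x
    have hxx : (inner ℂ x x : ℂ) = 1 := by
      rw [inner_self_eq_norm_sq_to_K, hx]; norm_num
    simp only [ContinuousLinearMap.sub_apply, ContinuousLinearMap.add_apply, inner_sub_left,
      inner_add_left, Complex.sub_re, Complex.add_re] at h2
    have e1 : (inner ℂ (((s ^ p - p * s ^ (p-1) * s) • (1:H →L[ℂ] H)) x) x : ℂ).re
        = s ^ p - p * s ^ (p-1) * s := by
      rw [aux_inner_re_smul_apply, ContinuousLinearMap.one_apply, hxx]; simp
    have e2 : (inner ℂ (((p * s ^ (p-1)) • T) x) x : ℂ).re = (p * s ^ (p-1)) * s := by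
      rw [aux_inner_re_smul_apply, ← hsdef]
    rw [e1, e2] at h2
    nlinarith

/-- The mixed Schwarz inequality `|⟨Ax,x⟩|² ≤ ⟨|A|x,x⟩ ⟨|A*|x,x⟩` for a unit vector `x`. -/
lemma aux_mixed_schwarz (A : H →L[ℂ] H) {x : H} (hx : ‖x‖ = 1) :
    ‖(inner ℂ (A x) x : ℂ)‖^2
      ≤ (inner ℂ (opAbs A x) x : ℂ).re * (inner ℂ (opAbs (adjoint A) x) x : ℂ).re := by
  set P := adjoint A * A with hPdef
  set Q := A * adjoint A with hQdef
  have hP0 : (0:H →L[ℂ] H) ≤ P := by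
    simpa [ContinuousLinearMap.star_eq_adjoint] using star_mul_self_nonneg A
  have hQ0 : (0:H →L[ℂ] H) ≤ Q := by
    simpa [ContinuousLinearMap.star_eq_adjoint] using mul_star_self_nonneg A
  have hPsa : IsSelfAdjoint P := IsSelfAdjoint.of_nonneg hP0
  have hQsa : IsSelfAdjoint Q := IsSelfAdjoint.of_nonneg hQ0
  have habs : opAbs A = cfc Real.sqrt P := aux_cfc_sqrt_eq P hP0
  have habs' : opAbs (adjoint A) = cfc Real.sqrt Q := by
    rw [opAbs, ContinuousLinearMap.adjoint_adjoint]
    exact aux_cfc_sqrt_eq Q hQ0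
  set a := (inner ℂ (opAbs A x) x : ℂ).re with hadef
  set b := (inner ℂ (opAbs (adjoint A) x) x : ℂ).re with hbdef
  have hsq0 : (0:H →L[ℂ] H) ≤ cfc Real.sqrt P := cfc_nonneg fun t _ => Real.sqrt_nonneg t
  have hsq0' : (0:H →L[ℂ] H) ≤ cfc Real.sqrt Q := cfc_nonneg fun t _ => Real.sqrt_nonneg t
  have ha0 : 0 ≤ a := by rw [hadef, habs]; exact aux_inner_re_nonneg hsq0 x
  have hb0 : 0 ≤ b := by rw [hbdef, habs']; exact aux_inner_re_nonneg hsq0' x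
  have hxx : (inner ℂ x x : ℂ) = 1 := by
    rw [inner_self_eq_norm_sq_to_K, hx]; norm_num
  have keyε : ∀ ε : ℝ, 0 < ε → ‖(inner ℂ (A x) x : ℂ)‖^2 ≤ (a + ε) * b := by
    intro ε hε
    set gf : ℝ → ℝ := fun t => Real.sqrt (Real.sqrt t + ε) with hgf
    have hpos : ∀ t : ℝ, 0 < Real.sqrt t + ε := fun t =>
      add_pos_of_nonneg_of_pos (Real.sqrt_nonneg t) hε
    have hgpos : ∀ t, 0 < gf t := fun t => Real.sqrt_pos.mpr (hpos t)
    have hgc : Continuous gf :=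
      Real.continuous_sqrt.comp (Real.continuous_sqrt.add continuous_const)
    set ff : ℝ → ℝ := fun t => (gf t)⁻¹ with hff
    have hfc : Continuous ff := hgc.inv₀ fun t => (hgpos t).ne'
    set E := cfc ff P with hE
    set G := cfc gf P with hG
    have hEsa : IsSelfAdjoint E := cfc_predicate _ _
    have hGsa : IsSelfAdjoint G := cfc_predicate _ _
    have hEG : E * G = 1 := by
      rw [hE, hG, ← cfc_mul _ _ P hfc.continuousOn hgc.continuousOn]
      calc cfc (fun t => ff t * gf t) P = cfc (1 : ℝ → ℝ) P := by
            refine cfc_congr fun t _ => ?_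
            simp only [hff, Pi.one_apply]
            exact inv_mul_cancel₀ (hgpos t).ne'
        _ = 1 := cfc_one ℝ P
    have hAx : A x = (A * E) (G x) := by
      have h1 : (A * E) * G = A := by rw [mul_assoc, hEG, mul_one]
      conv_lhs => rw [← h1]
      rw [ContinuousLinearMap.mul_apply]
    have hCS : ‖(inner ℂ (A x) x : ℂ)‖ ≤ ‖G x‖ * ‖adjoint (A * E) x‖ := by
      rw [hAx, ← ContinuousLinearMap.adjoint_inner_right]
      exact norm_inner_le_norm _ _
    have hGG : G * G = opAbs A + ε • 1 := by
      rw [hG, ← cfc_mul _ _ P hgc.continuousOn hgc.continuousOn, habs]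
      have : cfc (fun t => gf t * gf t) P = cfc (fun t : ℝ => Real.sqrt t + ε) P := by
        refine cfc_congr fun t _ => ?_
        simp only [hgf]
        exact Real.mul_self_sqrt (hpos t).le
      rw [this, cfc_add P _ _ Real.continuous_sqrt.continuousOn (by fun_prop)]
      congr 1
      rw [cfc_const _ _ hPsa, Algebra.algebraMap_eq_smul_one]
    have hG2 : ‖G x‖^2 = a + ε := by
      rw [← inner_self_eq_norm_sq (𝕜 := ℂ)]
      have hGadj : adjoint G = G := by
        rw [← ContinuousLinearMap.star_eq_adjoint]; exact hGsa
      have h1 : ((inner ℂ (G x) (G x) : ℂ)).re = (inner ℂ ((G * G) x) x : ℂ).re := by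
        rw [ContinuousLinearMap.mul_apply]
        conv_rhs => rw [← ContinuousLinearMap.adjoint_inner_right, hGadj]
      rw [RCLike.re_to_complex, h1, hGG]
      rw [ContinuousLinearMap.add_apply, inner_add_left, Complex.add_re, ← hadef,
        aux_inner_re_smul_apply ε 1 x, ContinuousLinearMap.one_apply, hxx]
      simp
    have hinv_c : Continuous (fun t : ℝ => (Real.sqrt t + ε)⁻¹) :=
      (Real.continuous_sqrt.add continuous_const).inv₀ fun t => (hpos t).ne'
    have hB2 : ‖adjoint (A * E) x‖^2 ≤ b := by
      have h1 : ((inner ℂ (adjoint (A * E) x) (adjoint (A * E) x) : ℂ)).re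
          = (inner ℂ (((A * E) * adjoint (A * E)) x) x : ℂ).re := by
        rw [ContinuousLinearMap.mul_apply]
        conv_rhs => rw [← ContinuousLinearMap.adjoint_inner_right]
      have h2 : (A * E) * adjoint (A * E) = cfc (fun t : ℝ => (Real.sqrt t + ε)⁻¹ * t) Q := by
        have hadj : adjoint (A * E) = E * adjoint A := by
          simp only [← ContinuousLinearMap.star_eq_adjoint, star_mul, hEsa.star_eq]
        rw [hadj]
        have hEE : E * E = cfc (fun t : ℝ => (Real.sqrt t + ε)⁻¹) P := by
          rw [hE, ← cfc_mul _ _ P hfc.continuousOn hfc.continuousOn]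
          refine cfc_congr fun t _ => ?_
          simp only [hff, hgf, ← mul_inv]
          rw [Real.mul_self_sqrt (hpos t).le]
        calc (A * E) * (E * adjoint A) = (A * (E * E)) * adjoint A := by
              simp only [mul_assoc]
          _ = (cfc (fun t : ℝ => (Real.sqrt t + ε)⁻¹) Q * A) * adjoint A := by
              rw [hEE, aux_cfc_intertwine A _ hinv_c]
          _ = cfc (fun t : ℝ => (Real.sqrt t + ε)⁻¹) Q * Q := by
              rw [mul_assoc, hQdef]
          _ = cfc (fun t : ℝ => (Real.sqrt t + ε)⁻¹ * t) Q := by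
              have hm : cfc (fun t : ℝ => (Real.sqrt t + ε)⁻¹ * t) Q
                  = cfc (fun t : ℝ => (Real.sqrt t + ε)⁻¹) Q * cfc (fun t : ℝ => t) Q :=
                cfc_mul _ _ Q hinv_c.continuousOn
                  (continuous_id : Continuous fun t : ℝ => t).continuousOn
              rw [hm, cfc_id' ℝ Q hQsa]
      have h3 : cfc (fun t : ℝ => (Real.sqrt t + ε)⁻¹ * t) Q ≤ cfc Real.sqrt Q := by
        refine cfc_mono (fun t ht => ?_)
          ((hinv_c.mul continuous_id).continuousOn) (Real.continuous_sqrt.continuousOn)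
        have ht' : 0 ≤ t := spectrum_nonneg_of_nonneg hQ0 ht
        rw [inv_mul_le_iff₀ (hpos t)]
        nlinarith [Real.sq_sqrt ht', Real.sqrt_nonneg t]
      rw [← inner_self_eq_norm_sq (𝕜 := ℂ), RCLike.re_to_complex, h1, h2]
      calc (inner ℂ ((cfc (fun t : ℝ => (Real.sqrt t + ε)⁻¹ * t) Q) x) x : ℂ).re
          ≤ (inner ℂ ((cfc Real.sqrt Q) x) x : ℂ).re := aux_inner_re_mono h3 x
        _ = b := by rw [hbdef, habs']
    calc ‖(inner ℂ (A x) x : ℂ)‖^2 ≤ (‖G x‖ * ‖adjoint (A * E) x‖)^2 := by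
          have h0 : (0:ℝ) ≤ ‖(inner ℂ (A x) x : ℂ)‖ := norm_nonneg _
          exact pow_le_pow_left₀ h0 hCS 2
      _ = ‖G x‖^2 * ‖adjoint (A * E) x‖^2 := by ring
      _ ≤ (a + ε) * b := by
          rw [hG2]
          exact mul_le_mul_of_nonneg_left hB2 (by linarith)
  refine le_of_forall_pos_le_add fun δ hδ => ?_
  have hε : 0 < δ / (b + 1) := div_pos hδ (by linarith)
  calc ‖(inner ℂ (A x) x : ℂ)‖^2 ≤ (a + δ / (b+1)) * b := keyε _ hε
    _ = a * b + (δ / (b+1)) * b := by ring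
    _ ≤ a * b + δ := by
        have : (δ / (b+1)) * b ≤ δ := by
          rw [div_mul_eq_mul_div, div_le_iff₀ (by linarith : (0:ℝ) < b + 1)]
          nlinarith
        linarith

omit [CompleteSpace H] in
lemma aux_norm_apply_sq [CompleteSpace H] (T : H →L[ℂ] H) (x : H) :
    ‖T x‖^2 = (inner ℂ ((adjoint T * T) x) x : ℂ).re := by
  rw [ContinuousLinearMap.mul_apply, ContinuousLinearMap.adjoint_inner_left]
  rw [← inner_self_eq_norm_sq (𝕜 := ℂ)]
  rfl

/-- The central pointwise estimate, for a unit vector `x`. -/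
lemma aux_pointwise (A : H →L[ℂ] H) {x : H} (hx : ‖x‖ = 1) {r : ℝ} (hr : 1 ≤ r)
    {α : ℝ} (hα : α ∈ Set.Icc (0 : ℝ) 1) :
    ‖(inner ℂ (A x) x : ℂ)‖ ^ (2 * r)
      ≤ (inner ℂ ((α • CFC.rpow ((2 : ℝ)⁻¹ • (opAbs A + opAbs (adjoint A))) (2 * r)
        + (1 - α) • CFC.rpow (opAbs A) (2 * r)) x) x : ℂ).re := by
  obtain ⟨hα0, hα1⟩ := hα
  set M : H →L[ℂ] H := (2 : ℝ)⁻¹ • (opAbs A + opAbs (adjoint A)) with hMdef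
  set P := adjoint A * A with hPdef
  have hP0 : (0:H →L[ℂ] H) ≤ P := by
    simpa [ContinuousLinearMap.star_eq_adjoint] using star_mul_self_nonneg A
  have habs0 : (0:H →L[ℂ] H) ≤ opAbs A := CFC.sqrt_nonneg _
  have habs0' : (0:H →L[ℂ] H) ≤ opAbs (adjoint A) := CFC.sqrt_nonneg _
  have hM0 : (0:H →L[ℂ] H) ≤ M := by
    refine aux_smul_nonneg (by norm_num) ?_
    rw [ContinuousLinearMap.nonneg_iff_isPositive] at habs0 habs0' ⊢
    exact habs0.add habs0'
  set t := ‖(inner ℂ (A x) x : ℂ)‖ with htdef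
  have ht0 : (0:ℝ) ≤ t := norm_nonneg _
  set a := (inner ℂ (opAbs A x) x : ℂ).re with hadef
  set b := (inner ℂ (opAbs (adjoint A) x) x : ℂ).re with hbdef
  have ha0 : 0 ≤ a := aux_inner_re_nonneg habs0 x
  have hb0 : 0 ≤ b := aux_inner_re_nonneg habs0' x
  set m := (inner ℂ (M x) x : ℂ).re with hmdef
  have hm : m = 2⁻¹ * (a + b) := by
    rw [hmdef, hMdef, aux_inner_re_smul_apply, aux_inner_re_add_apply]
  have hm0 : 0 ≤ m := aux_inner_re_nonneg hM0 x
  -- t ≤ m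
  have htm : t ≤ m := by
    have h1 : t^2 ≤ a * b := aux_mixed_schwarz A hx
    have h2 : a * b ≤ m^2 := by rw [hm]; nlinarith [sq_nonneg (a - b)]
    nlinarith
  -- t^2 ≤ d
  set d := (inner ℂ (P x) x : ℂ).re with hddef
  have htd : t^2 ≤ d := by
    have h1 : t ≤ ‖A x‖ := by
      calc t ≤ ‖A x‖ * ‖x‖ := norm_inner_le_norm _ _
        _ = ‖A x‖ := by rw [hx, mul_one]
    calc t^2 ≤ ‖A x‖^2 := by nlinarith [norm_nonneg (A x)]
      _ = d := aux_norm_apply_sq A x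
  have hd0 : 0 ≤ d := aux_inner_re_nonneg hP0 x
  have h2r : (1:ℝ) ≤ 2 * r := by linarith
  have h2r0 : (0:ℝ) ≤ 2 * r := by linarith
  -- McCarthy on M
  set u := (inner ℂ ((CFC.rpow M (2*r)) x) x : ℂ).re with hudef
  set v := (inner ℂ ((CFC.rpow (opAbs A) (2*r)) x) x : ℂ).re with hvdef
  have hmu : m ^ (2*r) ≤ u := aux_mccarthy hM0 hx h2r
  have hu0 : 0 ≤ u := aux_inner_re_nonneg (CFC.rpow_nonneg) x
  have hv0 : 0 ≤ v := aux_inner_re_nonneg (CFC.rpow_nonneg) x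
  -- McCarthy on P with exponent r, and |A|^{2r} = P^r
  have hPr : CFC.rpow (opAbs A) (2*r) = CFC.rpow P r := by
    have h1 := CFC.rpow_sqrt_nnreal (A := H →L[ℂ] H) (a := P) (x := ⟨2*r, h2r0⟩) hP0
    change (CFC.sqrt P) ^ (2*r) = P ^ (2*r/2) at h1
    rw [opAbs, ← hPdef, CFC.rpow_eq_pow, CFC.rpow_eq_pow, h1]
    have h2 : 2*r/2 = r := by ring
    rw [h2]
  have hdv : d ^ r ≤ v := by
    rw [hvdef, hPr]
    exact aux_mccarthy hP0 hx hr
  -- combine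
  have hchain : t ^ (2*r) ≤ α * u + (1 - α) * v := by
    have e0 : t ^ (2*r) = (t ^ (2*r)) ^ α * (t ^ (2*r)) ^ (1 - α) := by
      rw [← Real.rpow_add' (Real.rpow_nonneg ht0 _) (by norm_num : α + (1-α) ≠ 0)]
      norm_num
    have e1 : (t ^ (2*r)) ^ α ≤ u ^ α := by
      refine Real.rpow_le_rpow (Real.rpow_nonneg ht0 _) ?_ hα0
      calc t ^ (2*r) ≤ m ^ (2*r) := Real.rpow_le_rpow ht0 htm h2r0
        _ ≤ u := hmu
    have e2 : (t ^ (2*r)) ^ (1-α) ≤ v ^ (1-α) := by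
      refine Real.rpow_le_rpow (Real.rpow_nonneg ht0 _) ?_ (by linarith)
      calc t ^ (2*r) = (t^2) ^ r := by
            rw [← Real.rpow_natCast t 2, ← Real.rpow_mul ht0]
            norm_num
        _ ≤ d ^ r := Real.rpow_le_rpow (by positivity) htd (by linarith)
        _ ≤ v := hdv
    calc t ^ (2*r) = (t ^ (2*r)) ^ α * (t ^ (2*r)) ^ (1 - α) := e0
      _ ≤ u ^ α * v ^ (1-α) := by
          refine mul_le_mul e1 e2 (Real.rpow_nonneg (Real.rpow_nonneg ht0 _) _) ?_
          exact Real.rpow_nonneg hu0 _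
      _ ≤ α * u + (1 - α) * v :=
          Real.geom_mean_le_arith_mean2_weighted hα0 (by linarith) hu0 hv0 (by ring)
  calc t ^ (2*r) ≤ α * u + (1 - α) * v := hchain
    _ = (inner ℂ ((α • CFC.rpow M (2*r) + (1 - α) • CFC.rpow (opAbs A) (2*r)) x) x : ℂ).re := by
        rw [aux_inner_re_add_apply, aux_inner_re_smul_apply, aux_inner_re_smul_apply]

end Auxiliary

theorem berezin_power_inequality_mean_abs'
    {H : Type*} [NormedAddCommGroup H] [InnerProductSpace ℂ H] [CompleteSpace H]
    {Ω : Type*} [Nonempty Ω] (k : Ω → H) (hk : ∀ lam, ‖k lam‖ = 1)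
    (A : H →L[ℂ] H) (r : ℝ) (hr : 1 ≤ r) (α : ℝ) (hα : α ∈ Set.Icc (0 : ℝ) 1) :
    ber k A ^ (2 * r) ≤
      ber k (α • CFC.rpow ((2 : ℝ)⁻¹ • (opAbs A + opAbs (adjoint A))) (2 * r)
        + (1 - α) • CFC.rpow (opAbs A) (2 * r)) := by
  set N : H →L[ℂ] H := α • CFC.rpow ((2 : ℝ)⁻¹ • (opAbs A + opAbs (adjoint A))) (2 * r)
      + (1 - α) • CFC.rpow (opAbs A) (2 * r) with hNdef
  have h2r0 : (0:ℝ) < 2 * r := by linarith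
  set C := ber k N with hCdef
  have hbddN : BddAbove (Set.range fun lam => ‖(inner ℂ (N (k lam)) (k lam) : ℂ)‖) := by
    refine ⟨‖N‖, ?_⟩
    rintro y ⟨lam, rfl⟩
    calc ‖(inner ℂ (N (k lam)) (k lam) : ℂ)‖ ≤ ‖N (k lam)‖ * ‖k lam‖ := norm_inner_le_norm _ _
      _ ≤ (‖N‖ * ‖k lam‖) * ‖k lam‖ :=
          mul_le_mul_of_nonneg_right (N.le_opNorm _) (norm_nonneg _)
      _ = ‖N‖ := by rw [hk]; ring
  have hC0 : 0 ≤ C := Real.iSup_nonneg fun lam => norm_nonneg _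
  have hpt : ∀ lam : Ω, ‖(inner ℂ (A (k lam)) (k lam) : ℂ)‖ ^ (2 * r) ≤ C := by
    intro lam
    calc ‖(inner ℂ (A (k lam)) (k lam) : ℂ)‖ ^ (2 * r)
        ≤ (inner ℂ (N (k lam)) (k lam) : ℂ).re := aux_pointwise A (hk lam) hr hα
      _ ≤ ‖(inner ℂ (N (k lam)) (k lam) : ℂ)‖ := Complex.re_le_norm _
      _ ≤ C := le_ciSup hbddN lam
  have hber0 : 0 ≤ ber k A := Real.iSup_nonneg fun lam => norm_nonneg _
  have hber : ber k A ≤ C ^ (2*r)⁻¹ := by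
    refine ciSup_le fun lam => ?_
    calc ‖(inner ℂ (A (k lam)) (k lam) : ℂ)‖
        = (‖(inner ℂ (A (k lam)) (k lam) : ℂ)‖ ^ (2*r)) ^ (2*r)⁻¹ :=
          (Real.rpow_rpow_inv (norm_nonneg _) h2r0.ne').symm
      _ ≤ C ^ (2*r)⁻¹ :=
          Real.rpow_le_rpow (Real.rpow_nonneg (norm_nonneg _) _) (hpt lam)
            (inv_nonneg.mpr h2r0.le)
  calc ber k A ^ (2 * r) ≤ (C ^ (2*r)⁻¹) ^ (2*r) :=
        Real.rpow_le_rpow hber0 hber h2r0.le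
    _ = C := Real.rpow_inv_rpow hC0 h2r0.ne'
end
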